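/- For all n > 0: L_{3n}(1, -1, q) = (-1)^n (q^{n(3n-1)/2} + q^{n(3n+1)/2}); and for all n ≥ 0: L_{3n+1}(1, -1, q) = (-1)^n q^{n(3n+1)/2}; and for all n ≥ 1: L_{3n-1}(1, -1, q) = (-1)^n q^{n(3n-1)/2}. -/

import Mathlib

open Finset

noncomputable section

abbrev K : Type := RatFunc ℚ

def q : K := RatFunc.X

def qint (a : K) (m : ℕ) : K := ∑ i ∈ range m, a ^ i

def qfact (a : K) (m : ℕ) : K := ∏ i ∈ range m, qint a (i + 1)

def qbinom (a : K) (n k : ℕ) : K :=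
  if k ≤ n then qfact a n / (qfact a k * qfact a (n - k)) else 0

/-- q-Fibonacci polynomials F_n(x,s,q) with base `a`. -/
def qF (a x s : K) : ℕ → K
  | 0 => 0
  | n + 1 => ∑ k ∈ range (n / 2 + 1),
      a ^ (k * (k + 1) / 2) * qbinom a (n - k) k * s ^ k * x ^ (n - 2 * k)

/-- q-Lucas polynomials L_n(x,s,q) with base `a` (L_0 = 2). -/
def qL (a x s : K) (n : ℕ) : K :=
  if n = 0 then 2 else
  ∑ k ∈ range (n / 2 + 1),
    a ^ (k * (k - 1) / 2) * (qint a n / qint a (n - k)) * qbinom a (n - k) k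
      * s ^ k * x ^ (n - 2 * k)

/-- Starred variant: L*_0 = 1, L*_n = L_n for n > 0. -/
def qLs (a x s : K) (n : ℕ) : K := if n = 0 then 1 else qL a x s n

/-- Rogers-Szegő polynomial. -/
def rs (a x y : K) (m : ℕ) : K := ∑ j ∈ range (m + 1), qbinom a m j * x ^ j * y ^ (m - j)

/-- q-Pochhammer (q;q)_m. -/
def qpoch (a : K) (m : ℕ) : K := ∏ j ∈ range m, (1 - a ^ (j + 1))

lemma qint_ne (m : ℕ) (hm : 1 ≤ m) : qint q m ≠ 0 := by
  have : qint q m = algebraMap (Polynomial ℚ) K (∑ i ∈ range m, Polynomial.X ^ i) := by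
    simp [qint, map_sum, map_pow, RatFunc.algebraMap_X, q]
  rw [this]
  apply RatFunc.algebraMap_ne_zero
  intro h
  have := congrArg (Polynomial.eval 1) h
  simp [Polynomial.eval_finset_sum] at this
  omega

lemma qfact_ne (m : ℕ) : qfact q m ≠ 0 := by
  apply Finset.prod_ne_zero_iff.2
  intro i _
  exact qint_ne _ (Nat.le_add_left 1 i)

lemma qfact_succ (m : ℕ) : qfact q (m + 1) = qfact q m * qint q (m + 1) :=
  Finset.prod_range_succ _ _

lemma qint_add (a b : ℕ) : qint q (a + b) = qint q a + q ^ a * qint q b := by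
  simp only [qint, Finset.sum_range_add, pow_add, Finset.mul_sum]

lemma qbinom_zero {a k : ℕ} (h : a < k) : qbinom q a k = 0 := by
  simp [qbinom, Nat.not_le.2 h]

lemma qbinom_zero' {n k : ℕ} (h1 : n < 2 * k) (h2 : 1 ≤ k) : qbinom q (n - k) k = 0 :=
  qbinom_zero (by omega)

lemma qbinom_n_zero (a : ℕ) : qbinom q a 0 = 1 := by
  simp only [qbinom, Nat.zero_le, if_true, Nat.sub_zero]
  rw [show qfact q 0 = 1 by simp [qfact], one_mul, div_self (qfact_ne a)]

lemma qbinom_self (a : ℕ) : qbinom q a a = 1 := by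
  simp only [qbinom, le_refl, if_true, Nat.sub_self]
  rw [show qfact q 0 = 1 by simp [qfact], mul_one, div_self (qfact_ne a)]

lemma qpascal1 {a k : ℕ} (hk : 1 ≤ k) (hka : k ≤ a) :
    qbinom q a k = qbinom q (a-1) k + q ^ (a-k) * qbinom q (a-1) (k-1) := by
  rcases eq_or_lt_of_le hka with rfl | hlt
  · rw [qbinom_self, qbinom_zero (by omega), Nat.sub_self, pow_zero, zero_add, one_mul,
      qbinom_self]
  · obtain ⟨k', rfl⟩ : ∃ k', k = k'+1 := ⟨k-1, by omega⟩
    obtain ⟨a', rfl⟩ : ∃ a', a = a'+1 := ⟨a-1, by omega⟩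
    have hk'a : k' + 1 ≤ a' := by omega
    simp only [qbinom, Nat.add_sub_cancel]
    rw [if_pos (by omega), if_pos (by omega), if_pos (by omega),
      show a'+1-(k'+1) = a'-k' from by omega]
    have e4 : a' - (k'+1) = a'-k'-1 := by omega
    have e1 : qfact q (a'+1) = qfact q a' * qint q (a'+1) := qfact_succ a'
    have e2 : qfact q (k'+1) = qfact q k' * qint q (k'+1) := qfact_succ k'
    have e3 : qfact q (a'-k') = qfact q (a'-k'-1) * qint q (a'-k') := by
      have := qfact_succ (a'-k'-1)
      rwa [show a'-k'-1+1 = a'-k' by omega] at this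
    have e5 : qint q (a'+1) = qint q (a'-k') + q^(a'-k') * qint q (k'+1) := by
      have := qint_add (a'-k') (k'+1)
      rwa [show a'-k'+(k'+1) = a'+1 by omega] at this
    rw [e4, e1, e2, e3, e5]
    have n1 : qfact q a' ≠ 0 := qfact_ne _
    have n2 : qfact q k' ≠ 0 := qfact_ne _
    have n3 : qfact q (a'-k'-1) ≠ 0 := qfact_ne _
    have n4 : qint q (a'-k') ≠ 0 := qint_ne _ (by omega)
    have n5 : qint q (k'+1) ≠ 0 := qint_ne _ (by omega)
    field_simp

lemma qpascal2 {a k : ℕ} (hk : 1 ≤ k) (hka : k ≤ a) :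
    qbinom q a k = q ^ k * qbinom q (a-1) k + qbinom q (a-1) (k-1) := by
  rcases eq_or_lt_of_le hka with rfl | hlt
  · rw [qbinom_self, qbinom_zero (by omega), qbinom_self]; ring
  · obtain ⟨k', rfl⟩ : ∃ k', k = k'+1 := ⟨k-1, by omega⟩
    obtain ⟨a', rfl⟩ : ∃ a', a = a'+1 := ⟨a-1, by omega⟩
    have hk'a : k' + 1 ≤ a' := by omega
    simp only [qbinom, Nat.add_sub_cancel]
    rw [if_pos (by omega), if_pos (by omega), if_pos (by omega),
      show a'+1-(k'+1) = a'-k' from by omega]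
    have e4 : a' - (k'+1) = a'-k'-1 := by omega
    have e1 : qfact q (a'+1) = qfact q a' * qint q (a'+1) := qfact_succ a'
    have e2 : qfact q (k'+1) = qfact q k' * qint q (k'+1) := qfact_succ k'
    have e3 : qfact q (a'-k') = qfact q (a'-k'-1) * qint q (a'-k') := by
      have := qfact_succ (a'-k'-1)
      rwa [show a'-k'-1+1 = a'-k' by omega] at this
    have e5 : qint q (a'+1) = qint q (k'+1) + q^(k'+1) * qint q (a'-k') := by
      have := qint_add (k'+1) (a'-k')
      rwa [show (k'+1)+(a'-k') = a'+1 by omega] at this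
    rw [e4, e1, e2, e3, e5]
    have n1 : qfact q a' ≠ 0 := qfact_ne _
    have n2 : qfact q k' ≠ 0 := qfact_ne _
    have n3 : qfact q (a'-k'-1) ≠ 0 := qfact_ne _
    have n4 : qint q (a'-k') ≠ 0 := qint_ne _ (by omega)
    have n5 : qint q (k'+1) ≠ 0 := qint_ne _ (by omega)
    field_simp
    ring

lemma qpascal3 {n k : ℕ} (hk : 1 ≤ k) (hkn : 2*k ≤ n) :
    qint q n / qint q (n-k) * qbinom q (n-k) k
      = qbinom q (n-k) k + q ^ (n-k) * qbinom q (n-k-1) (k-1) := by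
  obtain ⟨k', rfl⟩ : ∃ k', k = k'+1 := ⟨k-1, by omega⟩
  have h1 : k'+1 ≤ n-(k'+1) := by omega
  simp only [qbinom]
  rw [if_pos (by omega), if_pos (by omega)]
  have e2 : qfact q (k'+1) = qfact q k' * qint q (k'+1) := qfact_succ k'
  have e3 : qfact q (n-(k'+1)) = qfact q (n-(k'+1)-1) * qint q (n-(k'+1)) := by
    have := qfact_succ (n-(k'+1)-1)
    rwa [show n-(k'+1)-1+1 = n-(k'+1) by omega] at this
  have e5 : qint q n = qint q (n-(k'+1)) + q^(n-(k'+1)) * qint q (k'+1) := by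
    have := qint_add (n-(k'+1)) (k'+1)
    rwa [show n-(k'+1)+(k'+1) = n by omega] at this
  rw [show k'+1-1 = k' from rfl,
    show n-(k'+1)-1-k' = n-2*k'-2 from by omega,
    show n-(k'+1)-(k'+1) = n-2*k'-2 from by omega,
    e2, e3, e5]
  have n1 : qfact q k' ≠ 0 := qfact_ne _
  have n2 : qfact q (n-2*k'-2) ≠ 0 := qfact_ne _
  have n3 : qfact q (n-(k'+1)-1) ≠ 0 := qfact_ne _
  have n4 : qint q (n-(k'+1)) ≠ 0 := qint_ne _ (by omega)
  have n5 : qint q (k'+1) ≠ 0 := qint_ne _ (by omega)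
  field_simp

def tri (k : ℕ) : ℕ := k * (k - 1) / 2

lemma tri_succ (k : ℕ) : tri (k+1) = tri k + k := by
  simp only [tri, Nat.add_sub_cancel]
  rcases k with _ | j
  · rfl
  · simp only [Nat.add_sub_cancel]
    rw [show (j+1+1)*(j+1) = (j+1)*j + (j+1)*2 from by ring,
      Nat.add_mul_div_right _ _ (by norm_num : (0:ℕ) < 2)]

def emm (m : ℕ) : ℕ := if m = 0 then 1 else tri (m-1)

def A (n : ℕ) : K := ∑ k ∈ range (n+1), (-1:K)^k * q^(tri k) * qbinom q (n-k) k

def Bt (n : ℕ) : K := ∑ m ∈ range (n+1), (-1:K)^m * q^(emm m) * qbinom q (n-m) m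

def pg (n : ℕ) : ℕ := n * (3*n-1) / 2
def ph (n : ℕ) : ℕ := n * (3*n+1) / 2

lemma pg_succ (m : ℕ) : pg (m+1) = pg m + (3*m+1) := by
  rcases m with _ | j
  · rfl
  · simp only [pg]
    rw [show 3*(j+1+1)-1 = 3*j+5 from by omega, show 3*(j+1)-1 = 3*j+2 from by omega,
      show (j+1+1)*(3*j+5) = (j+1)*(3*j+2) + (3*(j+1)+1)*2 from by ring,
      Nat.add_mul_div_right _ _ (by norm_num : (0:ℕ) < 2)]

lemma ph_succ (m : ℕ) : ph (m+1) = ph m + (3*m+2) := by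
  simp only [ph]
  rw [show (m+1)*(3*(m+1)+1) = m*(3*m+1) + (3*m+2)*2 from by ring,
    Nat.add_mul_div_right _ _ (by norm_num : (0:ℕ) < 2)]

lemma sum_extend {N M : ℕ} (h : N ≤ M) {f : ℕ → K} (hf : ∀ k, N ≤ k → f k = 0) :
    ∑ k ∈ range N, f k = ∑ k ∈ range M, f k :=
  Finset.sum_subset (Finset.range_subset_range.2 h) (fun k _ hk => hf k (by simpa using hk))

lemma qint1 : qint q 1 = 1 := by simp [qint]

lemma qL_eq {n : ℕ} (hn : 2 ≤ n) : qL q 1 (-1) n = A n - q^(n-1) * A (n-2) := by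
  have hqn : qint q n ≠ 0 := qint_ne _ (by omega)
  have h0 : qL q 1 (-1) n
      = ∑ k ∈ range (n+1), (-1:K)^k * q^(tri k) * (qint q n / qint q (n-k) * qbinom q (n-k) k) := by
    rw [qL, if_neg (show ¬ n = 0 from by omega)]
    have hv : ∀ k, n/2+1 ≤ k →
        q ^ (k * (k - 1) / 2) * (qint q n / qint q (n - k)) * qbinom q (n - k) k * (-1:K) ^ k
          * 1 ^ (n - 2 * k) = 0 := by
      intro k hk
      rw [qbinom_zero' (by omega) (by omega)]
      ring
    rw [sum_extend (show n/2+1 ≤ n+1 from by omega) hv]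
    refine Finset.sum_congr rfl fun k _ => ?_
    simp only [tri, one_pow]
    ring
  have key : ∀ k ∈ range (n+1),
      (-1:K)^k * q^(tri k) * (qint q n / qint q (n-k) * qbinom q (n-k) k)
      = (-1:K)^k * q^(tri k) * qbinom q (n-k) k
        + (if k = 0 then 0 else (-1:K)^k * q^(tri k + (n-k)) * qbinom q (n-k-1) (k-1)) := by
    intro k _
    rcases eq_or_ne k 0 with rfl | hk0
    · simp [div_self hqn, qbinom_n_zero]
    · rw [if_neg hk0]
      rcases le_or_gt (2*k) n with hle | hlt
      · rw [qpascal3 (by omega) hle, pow_add]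
        ring
      · rw [qbinom_zero' hlt (by omega), qbinom_zero (show n-k-1 < k-1 from by omega)]
        simp
  rw [h0, Finset.sum_congr rfl key, Finset.sum_add_distrib]
  have h2 : ∑ k ∈ range (n+1),
      (if k = 0 then (0:K) else (-1:K)^k * q^(tri k + (n-k)) * qbinom q (n-k-1) (k-1))
      = - (q^(n-1) * A (n-2)) := by
    rw [Finset.sum_range_succ', if_pos rfl, add_zero]
    have h3 : ∀ m ∈ range n,
        (if m+1 = 0 then (0:K) else (-1:K)^(m+1) * q^(tri (m+1) + (n-(m+1))) * qbinom q (n-(m+1)-1) (m+1-1))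
        = - (q^(n-1) * ((-1:K)^m * q^(tri m) * qbinom q ((n-2)-m) m)) := by
      intro m hm
      simp only [mem_range] at hm
      rw [if_neg (Nat.succ_ne_zero m), Nat.add_sub_cancel,
        show n-(m+1)-1 = (n-2)-m from by omega,
        show tri (m+1) + (n-(m+1)) = (n-1) + tri m from by have := tri_succ m; omega,
        pow_add]
      ring
    rw [Finset.sum_congr rfl h3]
    have h4 : A (n-2) = ∑ m ∈ range n, (-1:K)^m * q^(tri m) * qbinom q ((n-2)-m) m := by
      rw [A, show n-2+1 = n-1 from by omega]
      refine sum_extend (by omega) fun m hm => ?_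
      rw [qbinom_zero (show (n-2)-m < m from by omega)]
      ring
    rw [h4, Finset.sum_neg_distrib, ← Finset.mul_sum]
  rw [h2, show A n = ∑ k ∈ range (n+1), (-1:K)^k * q^(tri k) * qbinom q (n-k) k from rfl]
  ring

lemma A_rec1 {n : ℕ} (hn : 3 ≤ n) : A n = A (n-1) - q^(n-3) * Bt (n-2) := by
  have key : ∀ k ∈ range (n+1),
      (-1:K)^k * q^(tri k) * qbinom q (n-k) k
      = (-1:K)^k * q^(tri k) * qbinom q ((n-1)-k) k
        + (if k = 0 then 0 else (-1:K)^k * q^(tri k + (n-2*k)) * qbinom q ((n-1)-k) (k-1)) := by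
    intro k _
    rcases eq_or_ne k 0 with rfl | hk0
    · simp [qbinom_n_zero]
    · rw [if_neg hk0]
      rcases le_or_gt (2*k) n with hle | hlt
      · have h := qpascal1 (a := n-k) (k := k) (by omega) (by omega)
        rw [show n-k-1 = (n-1)-k from by omega, show (n-k)-k = n-2*k from by omega] at h
        rw [h, pow_add]
        ring
      · rw [qbinom_zero' hlt (by omega), qbinom_zero (show (n-1)-k < k from by omega),
          qbinom_zero (show (n-1)-k < k-1 from by omega)]
        simp
  have h1 : ∑ k ∈ range (n+1), (-1:K)^k * q^(tri k) * qbinom q ((n-1)-k) k = A (n-1) := by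
    rw [A, show n-1+1 = n from by omega]
    refine (sum_extend (by omega) fun k hk => ?_).symm
    rw [qbinom_zero (show (n-1)-k < k from by omega)]
    ring
  have h2 : ∑ k ∈ range (n+1),
      (if k = 0 then (0:K) else (-1:K)^k * q^(tri k + (n-2*k)) * qbinom q ((n-1)-k) (k-1))
      = - (q^(n-3) * Bt (n-2)) := by
    rw [Finset.sum_range_succ', if_pos rfl, add_zero]
    have h3 : ∀ m ∈ range n,
        (if m+1 = 0 then (0:K) else (-1:K)^(m+1) * q^(tri (m+1) + (n-2*(m+1))) * qbinom q ((n-1)-(m+1)) (m+1-1))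
        = - (q^(n-3) * ((-1:K)^m * q^(emm m) * qbinom q ((n-2)-m) m)) := by
      intro m hm
      simp only [mem_range] at hm
      rw [if_neg (Nat.succ_ne_zero m), Nat.add_sub_cancel,
        show (n-1)-(m+1) = (n-2)-m from by omega]
      rcases le_or_gt (2*m+2) n with hle | hlt
      · rw [show tri (m+1) + (n-2*(m+1)) = (n-3) + emm m from by
          have t1 := tri_succ m
          rcases eq_or_ne m 0 with rfl | hm0
          · have e1 : emm 0 = 1 := rfl
            have e2 : tri (0+1) = 0 := rfl
            have e3 : tri 0 = 0 := rfl
            omega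
          · simp only [emm, if_neg hm0]
            have t2 : tri m = tri (m-1) + (m-1) := by
              have := tri_succ (m-1); rwa [show m-1+1 = m from by omega] at this
            omega,
          pow_add]
        ring
      · rw [qbinom_zero (show (n-2)-m < m from by omega)]
        ring
    rw [Finset.sum_congr rfl h3]
    have h4 : Bt (n-2) = ∑ m ∈ range n, (-1:K)^m * q^(emm m) * qbinom q ((n-2)-m) m := by
      rw [Bt, show n-2+1 = n-1 from by omega]
      refine sum_extend (by omega) fun m hm => ?_
      rw [qbinom_zero (show (n-2)-m < m from by omega)]
      ring
    rw [h4, Finset.sum_neg_distrib, ← Finset.mul_sum]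
  rw [A, Finset.sum_congr rfl key, Finset.sum_add_distrib, h1, h2]
  ring

lemma Bt_rec {n : ℕ} (hn : 2 ≤ n) : Bt n = q * A (n-1) - A (n-2) := by
  have key : ∀ m ∈ range (n+1),
      (-1:K)^m * q^(emm m) * qbinom q (n-m) m
      = q * ((-1:K)^m * q^(tri m) * qbinom q ((n-1)-m) m)
        + (if m = 0 then 0 else (-1:K)^m * q^(emm m) * qbinom q ((n-1)-m) (m-1)) := by
    intro m _
    rcases eq_or_ne m 0 with rfl | hm0
    · rw [if_pos rfl, show emm 0 = 1 from rfl, show tri 0 = 0 from rfl, Nat.sub_zero,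
        qbinom_n_zero, qbinom_n_zero]
      ring
    · rw [if_neg hm0]
      have hEm : emm m + m = tri m + 1 := by
        simp only [emm, if_neg hm0]
        have t2 : tri m = tri (m-1) + (m-1) := by
          have := tri_succ (m-1); rwa [show m-1+1 = m from by omega] at this
        omega
      have e : (q:K)^(emm m) * q^m = q * q^(tri m) := by
        rw [← pow_add, hEm, pow_succ]; ring
      rcases le_or_gt (2*m) n with hle | hlt
      · have h := qpascal2 (a := n-m) (k := m) (by omega) (by omega)
        rw [show n-m-1 = (n-1)-m from by omega] at h
        rw [h, mul_add]
        have e2 : (-1:K)^m * q^(emm m) * (q^m * qbinom q ((n-1)-m) m)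
            = q * ((-1:K)^m * q^(tri m) * qbinom q ((n-1)-m) m) := by
          have : (-1:K)^m * q^(emm m) * (q^m * qbinom q ((n-1)-m) m)
              = ((q:K)^(emm m) * q^m) * ((-1:K)^m * qbinom q ((n-1)-m) m) := by ring
          rw [this, e]; ring
        rw [e2]
      · rw [qbinom_zero (show n-m < m from by omega),
          qbinom_zero (show (n-1)-m < m from by omega),
          qbinom_zero (show (n-1)-m < m-1 from by omega)]
        simp
  have h1 : ∑ m ∈ range (n+1), q * ((-1:K)^m * q^(tri m) * qbinom q ((n-1)-m) m)
      = q * A (n-1) := by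
    rw [← Finset.mul_sum]
    congr 1
    rw [A, show n-1+1 = n from by omega]
    refine (sum_extend (by omega) fun m hm => ?_).symm
    rw [qbinom_zero (show (n-1)-m < m from by omega)]
    ring
  have h2 : ∑ m ∈ range (n+1),
      (if m = 0 then (0:K) else (-1:K)^m * q^(emm m) * qbinom q ((n-1)-m) (m-1))
      = - A (n-2) := by
    rw [Finset.sum_range_succ', if_pos rfl, add_zero]
    have h3 : ∀ r ∈ range n,
        (if r+1 = 0 then (0:K) else (-1:K)^(r+1) * q^(emm (r+1)) * qbinom q ((n-1)-(r+1)) (r+1-1))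
        = - ((-1:K)^r * q^(tri r) * qbinom q ((n-2)-r) r) := by
      intro r hr
      rw [if_neg (Nat.succ_ne_zero r), Nat.add_sub_cancel,
        show emm (r+1) = tri r from by simp [emm],
        show (n-1)-(r+1) = (n-2)-r from by omega]
      ring
    rw [Finset.sum_congr rfl h3]
    have h4 : A (n-2) = ∑ r ∈ range n, (-1:K)^r * q^(tri r) * qbinom q ((n-2)-r) r := by
      rw [A, show n-2+1 = n-1 from by omega]
      refine sum_extend (by omega) fun r hr => ?_
      rw [qbinom_zero (show (n-2)-r < r from by omega)]
      ring
    rw [h4, Finset.sum_neg_distrib]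
  rw [Bt, Finset.sum_congr rfl key, Finset.sum_add_distrib, h1, h2]
  ring

lemma A_rec {n : ℕ} (hn : 4 ≤ n) :
    A n = A (n-1) - q^(n-2) * A (n-3) + q^(n-3) * A (n-4) := by
  rw [A_rec1 (by omega), Bt_rec (show 2 ≤ n-2 from by omega),
    show n-2-1 = n-3 from by omega, show n-2-2 = n-4 from by omega]
  rw [mul_sub, ← mul_assoc, mul_comm (q^(n-3)) q, ← pow_succ',
    show n-3+1 = n-2 from by omega]
  ring

lemma qb21 : qbinom q 2 1 = 1 + q := by
  rw [qbinom, if_pos (by norm_num)]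
  rw [show (2:ℕ)-1 = 1 from rfl, show qfact q 2 = qfact q 1 * qint q 2 from qfact_succ 1,
    show qfact q 1 = qfact q 0 * qint q 1 from qfact_succ 0,
    show qfact q 0 = 1 from rfl, qint1,
    show qint q 2 = 1 + q from by simp [qint, Finset.sum_range_succ]]
  norm_num

lemma A0 : A 0 = 1 := by
  simp [A, show tri 0 = 0 from rfl, qbinom_n_zero]

lemma A1 : A 1 = 1 := by
  rw [A]
  rw [Finset.sum_range_succ, Finset.sum_range_succ, Finset.sum_range_zero]
  rw [show tri 0 = 0 from rfl, show tri 1 = 0 from rfl, show (1:ℕ)-0 = 1 from rfl,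
    show (1:ℕ)-1 = 0 from rfl, qbinom_n_zero, qbinom_zero (show 0 < 1 from one_pos)]
  ring

lemma A2 : A 2 = 0 := by
  rw [A]
  rw [Finset.sum_range_succ, Finset.sum_range_succ, Finset.sum_range_succ, Finset.sum_range_zero]
  rw [show tri 0 = 0 from rfl, show tri 1 = 0 from rfl, show (2:ℕ)-0 = 2 from rfl,
    show (2:ℕ)-1 = 1 from rfl, show (2:ℕ)-2 = 0 from rfl,
    qbinom_n_zero, qbinom_self, qbinom_zero (show 0 < 2 from by norm_num)]
  ring

lemma A3 : A 3 = -q := by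
  rw [A]
  rw [Finset.sum_range_succ, Finset.sum_range_succ, Finset.sum_range_succ,
    Finset.sum_range_succ, Finset.sum_range_zero]
  rw [show tri 0 = 0 from rfl, show tri 1 = 0 from rfl, show tri 2 = 1 from rfl,
    show (3:ℕ)-0 = 3 from rfl, show (3:ℕ)-1 = 2 from rfl, show (3:ℕ)-2 = 1 from rfl,
    show (3:ℕ)-3 = 0 from rfl,
    qbinom_n_zero, qb21, qbinom_zero (show 1 < 2 from by norm_num),
    qbinom_zero (show 0 < 3 from by norm_num)]
  ring

def Af (n : ℕ) : K :=
  if n % 3 = 0 then (-1:K)^(n/3) * q^(pg (n/3))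
  else if n % 3 = 1 then (-1:K)^(n/3) * q^(ph (n/3))
  else 0

lemma Af0 (m : ℕ) : Af (3*m) = (-1:K)^m * q^(pg m) := by
  have h1 : (3*m) % 3 = 0 := by omega
  have h2 : (3*m) / 3 = m := by omega
  simp [Af, h1, h2]

lemma Af1 (m : ℕ) : Af (3*m+1) = (-1:K)^m * q^(ph m) := by
  have h1 : (3*m+1) % 3 = 1 := by omega
  have h2 : (3*m+1) / 3 = m := by omega
  simp [Af, h1, h2]

lemma Af2 (m : ℕ) : Af (3*m+2) = 0 := by
  have h1 : (3*m+2) % 3 = 2 := by omega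
  simp [Af, h1]

lemma A_closed : ∀ n, A n = Af n := by
  intro n
  induction n using Nat.strong_induction_on with
  | _ n ih =>
    rcases lt_or_ge n 4 with h | h
    · interval_cases n
      · rw [A0, show (0:ℕ) = 3*0 from rfl, Af0, show pg 0 = 0 from rfl]; norm_num
      · rw [A1, show (1:ℕ) = 3*0+1 from rfl, Af1, show ph 0 = 0 from rfl]; norm_num
      · rw [A2, show (2:ℕ) = 3*0+2 from rfl, Af2]
      · rw [A3, show (3:ℕ) = 3*1 from rfl, Af0, show pg 1 = 1 from rfl]; norm_num
    · rw [A_rec h, ih (n-1) (by omega), ih (n-3) (by omega), ih (n-4) (by omega)]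
      obtain ⟨j, rfl | rfl | rfl⟩ : ∃ j, n = 3*j+6 ∨ n = 3*j+4 ∨ n = 3*j+5 := by
        refine ⟨(n-4)/3, ?_⟩; omega
      · rw [show 3*j+6-1 = 3*(j+1)+2 from by omega, show 3*j+6-2 = 3*(j+1)+1 from by omega,
          show 3*j+6-3 = 3*(j+1) from by omega, show 3*j+6-4 = 3*j+2 from by omega,
          show 3*j+6 = 3*(j+2) from by ring,
          Af2, Af0, Af2, Af0,
          show pg (j+2) = pg (j+1) + (3*(j+1)+1) from pg_succ (j+1), pow_add]
        ring
      · rw [show 3*j+4-1 = 3*(j+1) from by omega, show 3*j+4-2 = 3*j+2 from by omega,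
          show 3*j+4-3 = 3*j+1 from by omega, show 3*j+4-4 = 3*j from by omega,
          show 3*j+4 = 3*(j+1)+1 from by ring,
          Af1, Af0, Af1, Af0,
          ph_succ j, pg_succ j, pow_add, pow_add]
        ring
      · rw [show 3*j+5-1 = 3*(j+1)+1 from by omega, show 3*j+5-2 = 3*(j+1) from by omega,
          show 3*j+5-3 = 3*j+2 from by omega, show 3*j+5-4 = 3*j+1 from by omega,
          show 3*j+5 = 3*(j+1)+2 from by ring,
          Af2, Af1, Af2, Af1,
          ph_succ j, pow_add]
        ring

theorem stmt16 :
    (∀ n : ℕ, 0 < n →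
      qL q 1 (-1) (3 * n) = (-1 : K) ^ n * (q ^ (n * (3 * n - 1) / 2) + q ^ (n * (3 * n + 1) / 2))) ∧
    (∀ n : ℕ, qL q 1 (-1) (3 * n + 1) = (-1 : K) ^ n * q ^ (n * (3 * n + 1) / 2)) ∧
    (∀ n : ℕ, 1 ≤ n →
      qL q 1 (-1) (3 * n - 1) = (-1 : K) ^ n * q ^ (n * (3 * n - 1) / 2)) := by
  refine ⟨?_, ?_, ?_⟩
  · intro n hn
    obtain ⟨j, rfl⟩ : ∃ j, n = j+1 := ⟨n-1, by omega⟩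
    have h := qL_eq (n := 3*(j+1)) (by omega)
    rw [show 3*(j+1)-1 = 3*j+2 from by omega, show 3*(j+1)-2 = 3*j+1 from by omega] at h
    rw [h, A_closed, A_closed, Af0, Af1,
      show (j+1) * (3*(j+1)-1)/2 = pg (j+1) from rfl,
      show (j+1) * (3*(j+1)+1)/2 = ph (j+1) from rfl,
      ph_succ j, pow_add]
    ring
  · intro n
    rcases n with _ | j
    · rw [show 3*0+1 = 1 from rfl, qL, if_neg (by norm_num)]
      rw [show (1:ℕ)/2+1 = 1 from rfl, Finset.sum_range_one]
      rw [show (1:ℕ)-0 = 1 from rfl, qint1, qbinom_n_zero]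
      norm_num
    · have h := qL_eq (n := 3*(j+1)+1) (by omega)
      rw [show 3*(j+1)+1-1 = 3*(j+1) from by omega,
        show 3*(j+1)+1-2 = 3*j+2 from by omega] at h
      rw [h, A_closed, A_closed, Af1, Af2,
        show (j+1) * (3*(j+1)+1)/2 = ph (j+1) from rfl]
      ring
  · intro n hn
    obtain ⟨j, rfl⟩ : ∃ j, n = j+1 := ⟨n-1, by omega⟩
    have h := qL_eq (n := 3*j+2) (by omega)
    rw [show 3*j+2-1 = 3*j+1 from by omega, show 3*j+2-2 = 3*j from by omega] at h
    rw [show 3*(j+1)-1 = 3*j+2 from by omega, h, A_closed, A_closed, Af2, Af0,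
      show (j+1) * (3*j+2)/2 = pg (j+1) from by unfold pg; rw [show 3*(j+1)-1 = 3*j+2 from by omega],
      pg_succ j, pow_add]
    ring
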